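/- Let κ(D,Z,X) = 1 − (1−D)Z/q(X) − D(1−Z)/(1−q(X)) with q(X) = ℙ(Z=1|X) ∈ [ε, 1−ε] a.s. Under the LTE assumptions (Z ⫫ (D(0),D(1)) | X, D = ZD(1)+(1−Z)D(0), monotonicity ℙ(D(1) ≥ D(0)|X)=1 a.s.), the conditional expectation satisfies E[κ(D,Z,X) | X, D(1), D(0)] = 1{D(1)=1, D(0)=0} almost surely; in particular κ has conditional expectation given (X, compliance type) equal to the complier indicator. -/

import Mathlib

open MeasureTheory ProbabilityTheory
open scoped Classical

/-- Conditional version of Abadie's κ theorem: conditional on covariates and potential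
treatments, `κ = 1 − (1−D)Z/q(X) − D(1−Z)/(1−q(X))` averages exactly to the indicator of
being a complier, i.e. `E[κ | X, D(1), D(0)] = 1{D(1)=1, D(0)=0}` a.s. -/
theorem statement19 {Ω : Type*} [MeasurableSpace Ω] [StandardBorelSpace Ω]
    (μ : Measure Ω) [IsProbabilityMeasure μ]
    {k : ℕ} (Z D0 D1 D : Ω → ℝ) (X : Ω → Fin k → ℝ) (q : (Fin k → ℝ) → ℝ) (ε : ℝ)
    (hZ : Measurable Z) (hD0 : Measurable D0) (hD1 : Measurable D1)
    (hX : Measurable X) (hq : Measurable q)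
    (hZval : ∀ ω, Z ω = 0 ∨ Z ω = 1) (hD0val : ∀ ω, D0 ω = 0 ∨ D0 ω = 1)
    (hD1val : ∀ ω, D1 ω = 0 ∨ D1 ω = 1)
    (hD : ∀ ω, D ω = Z ω * D1 ω + (1 - Z ω) * D0 ω)
    (hci : CondIndepFun (MeasurableSpace.comap X inferInstance) hX.comap_le
      (fun ω => (D0 ω, D1 ω)) Z μ)
    (hmono : ∀ᵐ ω ∂μ, D0 ω ≤ D1 ω)
    (hε : 0 < ε) (hqb : ∀ᵐ ω ∂μ, ε ≤ q (X ω) ∧ q (X ω) ≤ 1 - ε)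
    (hqcond : μ[Z | MeasurableSpace.comap X inferInstance] =ᵐ[μ] fun ω => q (X ω)) :
    μ[(fun ω => 1 - (1 - D ω) * Z ω / q (X ω) - D ω * (1 - Z ω) / (1 - q (X ω))) |
        MeasurableSpace.comap (fun ω => (X ω, D1 ω, D0 ω)) inferInstance]
      =ᵐ[μ] fun ω => if D1 ω = 1 ∧ D0 ω = 0 then (1 : ℝ) else 0 := by
  rename_i mΩ sb ipm
  set m' : MeasurableSpace Ω := MeasurableSpace.comap X inferInstance with hm'def
  set W : Ω → ℝ × ℝ := fun ω => (D1 ω, D0 ω) with hWdef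
  set φ : Ω → (Fin k → ℝ) × ℝ × ℝ := fun ω => (X ω, D1 ω, D0 ω) with hφdef
  set m₂ : MeasurableSpace Ω := MeasurableSpace.comap φ inferInstance with hm₂def
  letI : MeasurableSpace Ω := mΩ
  have hW : Measurable[mΩ] W := hD1.prodMk hD0
  have hφ : Measurable[mΩ] φ := hX.prodMk hW
  have hm₂ : m₂ ≤ mΩ := hφ.comap_le
  have hm'le : m' ≤ mΩ := hX.comap_le
  have hm'₂ : m' ≤ m₂ := by
    have hXeq : X = Prod.fst ∘ φ := rfl
    rw [hm'def, hm₂def, hXeq, ← MeasurableSpace.comap_comp]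
    exact MeasurableSpace.comap_mono measurable_fst.comap_le
  have hφm : Measurable[m₂] φ := Measurable.of_comap_le le_rfl
  have hXm₂ : Measurable[m₂] X := measurable_fst.comp hφm
  have hD1m₂ : Measurable[m₂] D1 := (measurable_fst.comp measurable_snd).comp hφm
  have hD0m₂ : Measurable[m₂] D0 := (measurable_snd.comp measurable_snd).comp hφm
  have hqXm₂ : Measurable[m₂] fun ω => q (X ω) := hq.comp hXm₂
  have hqXm' : Measurable[m'] fun ω => q (X ω) := hq.comp (Measurable.of_comap_le le_rfl)
  -- basic integrability
  have hZint : Integrable Z μ := by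
    refine (integrable_const (1 : ℝ)).mono' hZ.aestronglyMeasurable
      (Filter.Eventually.of_forall fun ω => ?_)
    rcases hZval ω with h | h <;> simp [h]
  have hqXint : Integrable (fun ω => q (X ω)) μ := by
    refine (integrable_const (1 : ℝ)).mono' (hq.comp hX).aestronglyMeasurable ?_
    filter_upwards [hqb] with ω hω
    rw [Real.norm_eq_abs, abs_le]
    constructor <;> [linarith [hω.1]; linarith [hω.2]]
  -- Z as an indicator
  have hZind : Z = Set.indicator (Z ⁻¹' {1}) fun _ => (1 : ℝ) := by
    funext ω
    rcases hZval ω with h | h <;> simp [Set.indicator_apply, h]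
  have hZcond1 : (μ[Set.indicator (Z ⁻¹' {1}) (fun _ => (1 : ℝ)) | m']) =ᵐ[μ]
      fun ω => q (X ω) := by
    rw [← hZind]; exact hqcond
  -- conditional independence in the convenient order
  have hci' : CondIndepFun m' hX.comap_le W Z μ := by
    have := hci.comp measurable_swap measurable_id
    exact this
  have hmul := (condIndepFun_iff_condExp_inter_preimage_eq_mul (hm' := hX.comap_le)
    hW hZ).mp hci'
  -- total integral equality
  have htot : ∫ ω, q (X ω) ∂μ = ∫ ω, Z ω ∂μ := by
    calc ∫ ω, q (X ω) ∂μ = ∫ ω, (μ[Z | m']) ω ∂μ := integral_congr_ae hqcond.symm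
      _ = ∫ ω, Z ω ∂μ := integral_condExp hm'le
  -- KEY: set-integral equality on all m₂-measurable sets
  have key : ∀ s : Set Ω, MeasurableSet[m₂] s →
      ∫ ω in s, q (X ω) ∂μ = ∫ ω in s, Z ω ∂μ := by
    rintro s ⟨B, hB, rfl⟩
    refine MeasurableSpace.induction_on_inter
      (C := fun B _ => ∫ ω in φ ⁻¹' B, q (X ω) ∂μ = ∫ ω in φ ⁻¹' B, Z ω ∂μ)
      ((generateFrom_prod (α := Fin k → ℝ) (β := ℝ × ℝ)).symm) isPiSystem_prod
      (by simp) ?_ ?_ ?_ _ hB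
    · rintro t ⟨A, hA, T, hT, rfl⟩
      have hpre : φ ⁻¹' (A ×ˢ T) = X ⁻¹' A ∩ W ⁻¹' T := Set.mk_preimage_prod X W
      have hu' : MeasurableSet[m'] (X ⁻¹' A) := ⟨A, hA, rfl⟩
      have hu : MeasurableSet[mΩ] (X ⁻¹' A) := hX hA
      have hv : MeasurableSet[mΩ] (W ⁻¹' T) := hW hT
      rw [hpre]
      -- Z side
      have hZside : ∫ ω in X ⁻¹' A ∩ W ⁻¹' T, Z ω ∂μ
          = ∫ ω in X ⁻¹' A, ((μ[Set.indicator (W ⁻¹' T) (fun _ => (1:ℝ)) | m']) ω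
              * q (X ω)) ∂μ := by
        have hindeq : Set.indicator (W ⁻¹' T) Z
            = Set.indicator (W ⁻¹' T ∩ Z ⁻¹' {1}) fun _ => (1 : ℝ) := by
          funext ω
          by_cases hvω : ω ∈ W ⁻¹' T <;> rcases hZval ω with h | h <;>
            simp [Set.indicator_apply, hvω, h]
        have hint : Integrable (Set.indicator (W ⁻¹' T) Z) μ := hZint.indicator hv
        have hcond : (μ[Set.indicator (W ⁻¹' T) Z | m']) =ᵐ[μ]
            fun ω => (μ[Set.indicator (W ⁻¹' T) (fun _ => (1:ℝ)) | m']) ω * q (X ω) := by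
          rw [hindeq]
          refine (hmul T {1} hT (measurableSet_singleton 1)).trans ?_
          filter_upwards [hZcond1] with ω hω
          rw [hω]
        calc ∫ ω in X ⁻¹' A ∩ W ⁻¹' T, Z ω ∂μ
            = ∫ ω in X ⁻¹' A, Set.indicator (W ⁻¹' T) Z ω ∂μ :=
              (setIntegral_indicator hv).symm
          _ = ∫ ω in X ⁻¹' A, (μ[Set.indicator (W ⁻¹' T) Z | m']) ω ∂μ :=
              (setIntegral_condExp hm'le hint hu').symm
          _ = _ := integral_congr_ae (ae_restrict_of_ae hcond)
      -- q side
      have hqside : ∫ ω in X ⁻¹' A ∩ W ⁻¹' T, q (X ω) ∂μ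
          = ∫ ω in X ⁻¹' A, (q (X ω)
              * (μ[Set.indicator (W ⁻¹' T) (fun _ => (1:ℝ)) | m']) ω) ∂μ := by
        have hindeq : Set.indicator (W ⁻¹' T) (fun ω => q (X ω))
            = (fun ω => q (X ω)) * Set.indicator (W ⁻¹' T) fun _ => (1 : ℝ) := by
          funext ω
          by_cases hvω : ω ∈ W ⁻¹' T <;> simp [Set.indicator_apply, hvω]
        have hint : Integrable (Set.indicator (W ⁻¹' T) fun ω => q (X ω)) μ :=
          hqXint.indicator hv
        have hind1int : Integrable (Set.indicator (W ⁻¹' T) fun _ => (1:ℝ)) μ :=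
          (integrable_const (1 : ℝ)).indicator hv
        have hbd : ∀ᵐ ω ∂μ, ‖q (X ω)‖ ≤ 1 := by
          filter_upwards [hqb] with ω hω
          rw [Real.norm_eq_abs, abs_le]
          constructor <;> [linarith [hω.1]; linarith [hω.2]]
        have hcond : (μ[Set.indicator (W ⁻¹' T) (fun ω => q (X ω)) | m']) =ᵐ[μ]
            fun ω => q (X ω) * (μ[Set.indicator (W ⁻¹' T) (fun _ => (1:ℝ)) | m']) ω := by
          rw [hindeq]
          exact condExp_stronglyMeasurable_mul_of_bound hm'le hqXm'.stronglyMeasurable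
            hind1int 1 hbd
        calc ∫ ω in X ⁻¹' A ∩ W ⁻¹' T, q (X ω) ∂μ
            = ∫ ω in X ⁻¹' A, Set.indicator (W ⁻¹' T) (fun ω => q (X ω)) ω ∂μ :=
              (setIntegral_indicator hv).symm
          _ = ∫ ω in X ⁻¹' A, (μ[Set.indicator (W ⁻¹' T) (fun ω => q (X ω)) | m']) ω ∂μ :=
              (setIntegral_condExp hm'le hint hu').symm
          _ = _ := integral_congr_ae (ae_restrict_of_ae hcond)
      rw [hZside, hqside]
      congr 1
      funext ω
      ring
    · intro t htm ht
      have h1 := integral_add_compl (hφ htm) hqXint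
      have h2 := integral_add_compl (hφ htm) hZint
      rw [Set.preimage_compl]
      have : (φ ⁻¹' t)ᶜ = φ ⁻¹' tᶜ := rfl
      linarith
    · intro f hdisj hfm hf
      rw [Set.preimage_iUnion,
        integral_iUnion (fun i => hφ (hfm i)) (fun i j hij => (hdisj hij).preimage φ)
          hqXint.integrableOn,
        integral_iUnion (fun i => hφ (hfm i)) (fun i j hij => (hdisj hij).preimage φ)
          hZint.integrableOn]
      exact tsum_congr hf
  -- conditional expectation of Z given m₂
  have condZ : (μ[Z | m₂]) =ᵐ[μ] fun ω => q (X ω) := by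
    refine (ae_eq_condExp_of_forall_setIntegral_eq hm₂ hZint
      (fun s _ _ => hqXint.restrict) (fun s hs _ => key s hs)
      hqXm₂.stronglyMeasurable.aestronglyMeasurable).symm
  -- rewrite κ
  set f₁ : Ω → ℝ := fun ω => (1 - D1 ω) / q (X ω) with hf₁def
  set f₂ : Ω → ℝ := fun ω => D0 ω / (1 - q (X ω)) with hf₂def
  have hrw : (fun ω => 1 - (1 - D ω) * Z ω / q (X ω) - D ω * (1 - Z ω) / (1 - q (X ω)))
      = (fun _ => (1 : ℝ)) - f₁ * Z - f₂ * ((fun _ => (1:ℝ)) - Z) := by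
    funext ω
    simp only [Pi.sub_apply, Pi.mul_apply, hf₁def, hf₂def]
    rcases hZval ω with h | h <;> simp [hD ω, h]
  rw [hrw]
  -- integrability of the pieces
  have hf₁m : Measurable[m₂] f₁ := (measurable_const.sub hD1m₂).div hqXm₂
  have hf₂m : Measurable[m₂] f₂ := hD0m₂.div (measurable_const.sub hqXm₂)
  have hf₁bd : ∀ᵐ ω ∂μ, ‖f₁ ω‖ ≤ 1 / ε := by
    filter_upwards [hqb] with ω hω
    have hq0 : 0 < q (X ω) := lt_of_lt_of_le hε hω.1
    rw [hf₁def, Real.norm_eq_abs, abs_div, abs_of_pos hq0]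
    have h1 : |1 - D1 ω| ≤ 1 := by
      rcases hD1val ω with h | h <;> simp [h]
    exact div_le_div₀ zero_le_one h1 hε hω.1
  have hf₂bd : ∀ᵐ ω ∂μ, ‖f₂ ω‖ ≤ 1 / ε := by
    filter_upwards [hqb] with ω hω
    have hq1 : 0 < 1 - q (X ω) := by linarith [hω.2]
    rw [hf₂def, Real.norm_eq_abs, abs_div, abs_of_pos hq1]
    have h1 : |D0 ω| ≤ 1 := by
      rcases hD0val ω with h | h <;> simp [h]
    exact div_le_div₀ zero_le_one h1 hε (by linarith [hω.2])
  have h1mZint : Integrable ((fun _ => (1:ℝ)) - Z) μ := (integrable_const (1:ℝ)).sub hZint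
  have hf₁Zint : Integrable (f₁ * Z) μ := by
    refine (integrable_const (1 / ε)).mono'
      ((((measurable_const.sub hD1).div (hq.comp hX)).mul hZ).aestronglyMeasurable) ?_
    filter_upwards [hf₁bd] with ω hω
    have hz : ‖Z ω‖ ≤ 1 := by rcases hZval ω with h | h <;> simp [h]
    calc ‖f₁ ω * Z ω‖ = ‖f₁ ω‖ * ‖Z ω‖ := norm_mul _ _
      _ ≤ (1 / ε) * 1 := mul_le_mul hω hz (norm_nonneg _) (by positivity)
      _ = 1 / ε := mul_one _
  have hf₂Zint : Integrable (f₂ * ((fun _ => (1:ℝ)) - Z)) μ := by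
    refine (integrable_const (1 / ε)).mono'
      (((hD0.div (measurable_const.sub (hq.comp hX))).mul
        (measurable_const.sub hZ)).aestronglyMeasurable) ?_
    filter_upwards [hf₂bd] with ω hω
    have hz : ‖1 - Z ω‖ ≤ 1 := by rcases hZval ω with h | h <;> simp [h]
    calc ‖f₂ ω * (1 - Z ω)‖ = ‖f₂ ω‖ * ‖1 - Z ω‖ := norm_mul _ _
      _ ≤ (1 / ε) * 1 := mul_le_mul hω hz (norm_nonneg _) (by positivity)
      _ = 1 / ε := mul_one _
  -- conditional expectation computation
  have hc1 : (μ[(fun _ => (1:ℝ)) - f₁ * Z - f₂ * ((fun _ => (1:ℝ)) - Z) | m₂]) =ᵐ[μ]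
      (μ[(fun _ => (1:ℝ)) - f₁ * Z | m₂]) - (μ[f₂ * ((fun _ => (1:ℝ)) - Z) | m₂]) :=
    condExp_sub ((integrable_const (1:ℝ)).sub hf₁Zint) hf₂Zint m₂
  have hc2 : (μ[(fun _ => (1:ℝ)) - f₁ * Z | m₂]) =ᵐ[μ]
      (μ[(fun _ => (1:ℝ)) | m₂]) - (μ[f₁ * Z | m₂]) :=
    condExp_sub (integrable_const (1:ℝ)) hf₁Zint m₂
  have hcconst : (μ[(fun _ => (1:ℝ)) | m₂]) = fun _ => (1:ℝ) := condExp_const hm₂ 1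
  have hpull₁ : (μ[f₁ * Z | m₂]) =ᵐ[μ] fun ω => f₁ ω * q (X ω) := by
    refine (condExp_stronglyMeasurable_mul_of_bound hm₂ hf₁m.stronglyMeasurable hZint
      (1 / ε) hf₁bd).trans ?_
    filter_upwards [condZ] with ω hω
    simp only [Pi.mul_apply]
    rw [hω]
  have hcond1mZ : (μ[(fun _ => (1:ℝ)) - Z | m₂]) =ᵐ[μ] fun ω => 1 - q (X ω) := by
    refine (condExp_sub (integrable_const (1:ℝ)) hZint m₂).trans ?_
    filter_upwards [condZ] with ω hω
    simp only [Pi.sub_apply, hcconst, hω]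
  have hpull₂ : (μ[f₂ * ((fun _ => (1:ℝ)) - Z) | m₂]) =ᵐ[μ]
      fun ω => f₂ ω * (1 - q (X ω)) := by
    refine (condExp_stronglyMeasurable_mul_of_bound hm₂ hf₂m.stronglyMeasurable h1mZint
      (1 / ε) hf₂bd).trans ?_
    filter_upwards [hcond1mZ] with ω hω
    simp only [Pi.mul_apply]
    rw [hω]
  -- final pointwise identity
  have final : (fun ω => 1 - f₁ ω * q (X ω) - f₂ ω * (1 - q (X ω))) =ᵐ[μ]
      fun ω => if D1 ω = 1 ∧ D0 ω = 0 then (1 : ℝ) else 0 := by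
    filter_upwards [hqb, hmono] with ω hω hmω
    have hq0 : q (X ω) ≠ 0 := ne_of_gt (lt_of_lt_of_le hε hω.1)
    have hq1 : 1 - q (X ω) ≠ 0 := ne_of_gt (by linarith [hω.2])
    simp only [hf₁def, hf₂def]
    rw [div_mul_cancel₀ _ hq0, div_mul_cancel₀ _ hq1]
    rcases hD1val ω with h | h <;> rcases hD0val ω with h0 | h0
    · norm_num [h, h0]
    · exact absurd hmω (by rw [h0, h]; norm_num)
    · norm_num [h, h0]
    · norm_num [h, h0]
  calc (μ[(fun _ => (1:ℝ)) - f₁ * Z - f₂ * ((fun _ => (1:ℝ)) - Z) | m₂])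
      =ᵐ[μ] (μ[(fun _ => (1:ℝ)) - f₁ * Z | m₂]) - (μ[f₂ * ((fun _ => (1:ℝ)) - Z) | m₂]) := hc1
    _ =ᵐ[μ] fun ω => 1 - f₁ ω * q (X ω) - f₂ ω * (1 - q (X ω)) := by
        filter_upwards [hc2, hpull₁, hpull₂] with ω h2 hp1 hp2
        simp only [Pi.sub_apply] at *
        rw [h2, hp1, hp2, hcconst]
    _ =ᵐ[μ] fun ω => if D1 ω = 1 ∧ D0 ω = 0 then (1 : ℝ) else 0 := final
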